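/- Let Λ ⊂ {1,…,N} and let x̃ ∈ ℝ^N with supp(x̃) ∩ Λ = ∅, and set S = supp(x̃) and h = A_Λᵀ A_Λ x̃. If the M×N real matrix Φ satisfies the RIP of order ‖x̃‖₀ + |Λ| with isometry constant δ < 1/2, then ‖h|_S‖₂ ≥ ((1−2δ)/(1−δ))‖x̃‖₂. -/

import Mathlib

noncomputable section

namespace OMP

open Matrix Finset

/-- The support of a vector, as a `Finset`. -/
def supp {n : ℕ} (x : Fin n → ℝ) : Finset (Fin n) :=
  Finset.univ.filter fun j => x j ≠ 0

/-- The Euclidean (ℓ²) norm of a vector. -/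
def l2 {n : ℕ} (x : Fin n → ℝ) : ℝ := Real.sqrt (∑ j, x j ^ 2)

/-- The ℓ^∞ norm of a vector. -/
def linf {n : ℕ} (x : Fin n → ℝ) : ℝ := ⨆ j, |x j|

/-- The standard inner product of two vectors. -/
def dotp {n : ℕ} (x y : Fin n → ℝ) : ℝ := ∑ j, x j * y j

/-- The restriction of a vector to a set of indices (zero elsewhere). -/
def restr {n : ℕ} (Γ : Finset (Fin n)) (x : Fin n → ℝ) : Fin n → ℝ :=
  fun j => if j ∈ Γ then x j else 0

/-- The restricted isometry property of order `K` with isometry constant `δ`. -/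
def RIP {M N : ℕ} (K : ℕ) (Φ : Matrix (Fin M) (Fin N) ℝ) (δ : ℝ) : Prop :=
  0 < δ ∧ δ < 1 ∧ ∀ x : Fin N → ℝ, (supp x).card ≤ K →
    (1 - δ) * l2 x ^ 2 ≤ l2 (Φ.mulVec x) ^ 2 ∧
      l2 (Φ.mulVec x) ^ 2 ≤ (1 + δ) * l2 x ^ 2

/-- The span of the columns of `Φ` indexed by `Λ`, as a submodule of Euclidean space. -/
def colSpan {M N : ℕ} (Φ : Matrix (Fin M) (Fin N) ℝ) (Λ : Finset (Fin N)) :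
    Submodule ℝ (EuclideanSpace ℝ (Fin M)) :=
  Submodule.span ℝ ((fun j => (WithLp.equiv 2 (Fin M → ℝ)).symm fun i => Φ i j) '' (Λ : Set (Fin N)))

/-- Orthogonal projection `P_Λ` onto the span of the columns of `Φ` indexed by `Λ`. -/
def projCol {M N : ℕ} (Φ : Matrix (Fin M) (Fin N) ℝ) (Λ : Finset (Fin N))
    (v : Fin M → ℝ) : Fin M → ℝ :=
  WithLp.equiv 2 (Fin M → ℝ)
    (Submodule.orthogonalProjectionOnto (colSpan Φ Λ) ((WithLp.equiv 2 (Fin M → ℝ)).symm v) : EuclideanSpace ℝ (Fin M))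

/-- The matrix `A_Λ = (I - P_Λ) Φ`: the columns of `Φ` orthogonalized against `colSpan Φ Λ`. -/
def Amat {M N : ℕ} (Φ : Matrix (Fin M) (Fin N) ℝ) (Λ : Finset (Fin N)) :
    Matrix (Fin M) (Fin N) ℝ :=
  Matrix.of fun i j => Φ i j - projCol Φ Λ (fun i' => Φ i' j) i

/-! ### Auxiliary lemmas -/

section Aux

variable {n : ℕ}

lemma l2_nonneg (x : Fin n → ℝ) : 0 ≤ l2 x := Real.sqrt_nonneg _

lemma l2_sq (x : Fin n → ℝ) : l2 x ^ 2 = ∑ j, x j ^ 2 :=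
  Real.sq_sqrt (Finset.sum_nonneg fun j _ => sq_nonneg _)

lemma dotp_self (x : Fin n → ℝ) : dotp x x = l2 x ^ 2 := by
  rw [l2_sq, dotp]; exact Finset.sum_congr rfl fun j _ => (sq (x j)).symm ▸ by ring

lemma dotp_comm (x y : Fin n → ℝ) : dotp x y = dotp y x :=
  Finset.sum_congr rfl fun j _ => mul_comm _ _

lemma dotp_sub_left (x y z : Fin n → ℝ) :
    dotp (fun j => x j - y j) z = dotp x z - dotp y z := by
  rw [dotp, dotp, dotp, ← Finset.sum_sub_distrib]
  exact Finset.sum_congr rfl fun j _ => by ring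

lemma l2_eq_zero_iff {x : Fin n → ℝ} : l2 x = 0 ↔ x = 0 := by
  constructor
  · intro h
    have hs : ∑ j, x j ^ 2 = 0 := by
      have h2 := l2_sq x
      rw [h] at h2; simpa using h2.symm
    funext j
    have := (Finset.sum_eq_zero_iff_of_nonneg (fun i _ => sq_nonneg (x i))).mp hs j
      (Finset.mem_univ j)
    exact pow_eq_zero_iff (two_ne_zero) |>.mp this
  · rintro rfl; simp [l2]

lemma dotp_le_l2_mul_l2 (x y : Fin n → ℝ) : dotp x y ≤ l2 x * l2 y := by
  have h := Finset.sum_mul_sq_le_sq_mul_sq Finset.univ x y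
  refine (le_abs_self _).trans ?_
  rw [← Real.sqrt_sq_eq_abs, l2, l2, ← Real.sqrt_mul (by positivity)]
  exact Real.sqrt_le_sqrt h

lemma supp_add_subset (u v : Fin n → ℝ) : supp (u + v) ⊆ supp u ∪ supp v := by
  intro j hj
  simp only [supp, Finset.mem_filter, Finset.mem_univ, true_and, Finset.mem_union,
    Pi.add_apply] at *
  by_contra hc
  push_neg at hc
  exact hj (by rw [hc.1, hc.2]; ring)

lemma supp_sub_subset (u v : Fin n → ℝ) : supp (u - v) ⊆ supp u ∪ supp v := by
  intro j hj
  simp only [supp, Finset.mem_filter, Finset.mem_univ, true_and, Finset.mem_union,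
    Pi.sub_apply] at *
  by_contra hc
  push_neg at hc
  exact hj (by rw [hc.1, hc.2]; ring)

lemma supp_smul_subset (c : ℝ) (u : Fin n → ℝ) : supp (c • u) ⊆ supp u := by
  intro j hj
  simp only [supp, Finset.mem_filter, Finset.mem_univ, true_and, Pi.smul_apply,
    smul_eq_mul] at *
  intro h0
  exact hj (by rw [h0]; ring)

lemma l2_add_sq (a b : Fin n → ℝ) :
    l2 (a + b) ^ 2 = l2 a ^ 2 + 2 * dotp a b + l2 b ^ 2 := by
  have key : ∑ j, (a j + b j) ^ 2 = ∑ j, (a j ^ 2 + 2 * (a j * b j) + b j ^ 2) :=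
    Finset.sum_congr rfl fun j _ => by ring
  simp only [l2_sq, dotp, Pi.add_apply]
  rw [key, Finset.sum_add_distrib, Finset.sum_add_distrib, ← Finset.mul_sum]

lemma l2_sub_sq (a b : Fin n → ℝ) :
    l2 (a - b) ^ 2 = l2 a ^ 2 - 2 * dotp a b + l2 b ^ 2 := by
  have key : ∑ j, (a j - b j) ^ 2 = ∑ j, (a j ^ 2 - 2 * (a j * b j) + b j ^ 2) :=
    Finset.sum_congr rfl fun j _ => by ring
  simp only [l2_sq, dotp, Pi.sub_apply]
  rw [key, Finset.sum_add_distrib, Finset.sum_sub_distrib, ← Finset.mul_sum]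

lemma l2_smul_sq (c : ℝ) (a : Fin n → ℝ) : l2 (c • a) ^ 2 = c ^ 2 * l2 a ^ 2 := by
  simp only [l2_sq, Pi.smul_apply, smul_eq_mul, Finset.mul_sum]
  exact Finset.sum_congr rfl fun j _ => by ring

lemma dotp_smul_smul (c : ℝ) (hc : c ≠ 0) (x y : Fin n → ℝ) :
    dotp (c • x) (c⁻¹ • y) = dotp x y := by
  simp only [dotp, Pi.smul_apply, smul_eq_mul]
  exact Finset.sum_congr rfl fun j _ => by field_simp

end Aux

/-! ### RIP inner-product bounds -/

section RIPlem

variable {M N K : ℕ} {Φ : Matrix (Fin M) (Fin N) ℝ} {δ : ℝ}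

lemma rip_ip_sym (hRIP : RIP K Φ δ) {u v : Fin N → ℝ}
    (hc : (supp u ∪ supp v).card ≤ K) :
    dotp (Φ.mulVec u) (Φ.mulVec v) ≤ dotp u v + δ / 2 * (l2 u ^ 2 + l2 v ^ 2) := by
  obtain ⟨hδ0, hδ1, hR⟩ := hRIP
  have h1 := (hR (u + v) ((Finset.card_le_card (supp_add_subset u v)).trans hc)).2
  have h2 := (hR (u - v) ((Finset.card_le_card (supp_sub_subset u v)).trans hc)).1
  rw [Matrix.mulVec_add] at h1
  rw [Matrix.mulVec_sub] at h2
  rw [l2_add_sq, l2_add_sq] at h1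
  rw [l2_sub_sq, l2_sub_sq] at h2
  nlinarith [sq_nonneg (l2 u - l2 v), sq_nonneg (l2 u + l2 v)]

lemma rip_ip (hRIP : RIP K Φ δ) {u v : Fin N → ℝ}
    (hc : (supp u ∪ supp v).card ≤ K) :
    dotp (Φ.mulVec u) (Φ.mulVec v) ≤ dotp u v + δ * (l2 u * l2 v) := by
  rcases eq_or_ne (l2 u) 0 with h0 | h0
  · obtain rfl := l2_eq_zero_iff.mp h0
    simp [dotp, Matrix.mulVec_zero, h0]
  rcases eq_or_ne (l2 v) 0 with h1 | h1
  · obtain rfl := l2_eq_zero_iff.mp h1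
    simp [dotp, Matrix.mulVec_zero, h1]
  have ha : 0 < l2 u := (l2_nonneg u).lt_of_ne (Ne.symm h0)
  have hb : 0 < l2 v := (l2_nonneg v).lt_of_ne (Ne.symm h1)
  set a := l2 u
  set b := l2 v
  set c := Real.sqrt (b / a) with hcdef
  have hcpos : 0 < c := Real.sqrt_pos.mpr (by positivity)
  have hc2 : c ^ 2 = b / a := Real.sq_sqrt (by positivity)
  have hcard : (supp (c • u) ∪ supp (c⁻¹ • v)).card ≤ K :=
    (Finset.card_le_card (Finset.union_subset_union (supp_smul_subset _ _)
      (supp_smul_subset _ _))).trans hc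
  have key := rip_ip_sym ⟨hRIP.1, hRIP.2.1, hRIP.2.2⟩ hcard
  rw [Matrix.mulVec_smul, Matrix.mulVec_smul, dotp_smul_smul c hcpos.ne' _ _,
    dotp_smul_smul c hcpos.ne' u v, l2_smul_sq, l2_smul_sq] at key
  have harith : c ^ 2 * a ^ 2 + (c⁻¹) ^ 2 * b ^ 2 = 2 * (a * b) := by
    rw [inv_pow, hc2]
    field_simp
    ring
  rw [harith] at key
  linarith

end RIPlem

/-! ### Projection lemmas -/

section Proj

variable {M N : ℕ}

lemma E_sum_apply {ι : Type*} (s : Finset ι) (f : ι → EuclideanSpace ℝ (Fin M)) (i : Fin M) :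
    (∑ j ∈ s, f j) i = ∑ j ∈ s, f j i := by
  induction s using Finset.cons_induction with
  | empty => rfl
  | cons a s ha ih =>
    rw [Finset.sum_cons, Finset.sum_cons]
    show f a i + (∑ j ∈ s, f j) i = f a i + ∑ j ∈ s, f j i
    rw [ih]

lemma inner_E (a b : EuclideanSpace ℝ (Fin M)) : (inner ℝ a b : ℝ) = ∑ i, a i * b i := by
  rw [PiLp.inner_apply]
  exact Finset.sum_congr rfl fun i _ => by
    simp [RCLike.inner_apply, mul_comm]

/-- The projection as a linear map on Euclidean space. -/
def projLM (Φ : Matrix (Fin M) (Fin N) ℝ) (Λ : Finset (Fin N)) :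
    EuclideanSpace ℝ (Fin M) →ₗ[ℝ] EuclideanSpace ℝ (Fin M) :=
  (colSpan Φ Λ).subtype ∘ₗ (Submodule.orthogonalProjectionOnto (colSpan Φ Λ)).toLinearMap

lemma projCol_eq (Φ : Matrix (Fin M) (Fin N) ℝ) (Λ : Finset (Fin N)) (v : Fin M → ℝ) :
    projCol Φ Λ v = projLM Φ Λ ((WithLp.equiv 2 (Fin M → ℝ)).symm v) := rfl

lemma mulVec_eq_sum_cols (Φ : Matrix (Fin M) (Fin N) ℝ) (x : Fin N → ℝ) :
    (WithLp.equiv 2 (Fin M → ℝ)).symm (Φ.mulVec x)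
      = ∑ j, x j • ((WithLp.equiv 2 (Fin M → ℝ)).symm fun i => Φ i j) := by
  ext i
  rw [E_sum_apply]
  show Φ.mulVec x i = ∑ j, x j * Φ i j
  simp [Matrix.mulVec, dotProduct, mul_comm]

lemma amat_mulVec (Φ : Matrix (Fin M) (Fin N) ℝ) (Λ : Finset (Fin N)) (x : Fin N → ℝ) :
    (Amat Φ Λ).mulVec x = fun i => Φ.mulVec x i - projCol Φ Λ (Φ.mulVec x) i := by
  have hproj : projLM Φ Λ ((WithLp.equiv 2 (Fin M → ℝ)).symm (Φ.mulVec x))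
      = ∑ j, x j • projLM Φ Λ ((WithLp.equiv 2 (Fin M → ℝ)).symm fun i => Φ i j) := by
    rw [mulVec_eq_sum_cols, map_sum]
    exact Finset.sum_congr rfl fun j _ => map_smul _ _ _
  funext i
  show ∑ j, (Φ i j - projCol Φ Λ (fun i' => Φ i' j) i) * x j
      = Φ.mulVec x i - projCol Φ Λ (Φ.mulVec x) i
  have h2 : projCol Φ Λ (Φ.mulVec x) i
      = ∑ j, x j * projCol Φ Λ (fun i' => Φ i' j) i := by
    rw [projCol_eq, hproj, E_sum_apply]
    exact Finset.sum_congr rfl fun j _ => rfl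
  rw [h2]
  rw [Matrix.mulVec, dotProduct, ← Finset.sum_sub_distrib]
  exact Finset.sum_congr rfl fun j _ => by ring

lemma dotp_transpose_mulVec (A : Matrix (Fin M) (Fin N) ℝ) (w : Fin M → ℝ) (x : Fin N → ℝ) :
    dotp (Aᵀ.mulVec w) x = dotp w (A.mulVec x) := by
  simp only [dotp, Matrix.mulVec, dotProduct, Matrix.transpose_apply,
    Finset.sum_mul, Finset.mul_sum]
  rw [Finset.sum_comm]
  exact Finset.sum_congr rfl fun i _ => Finset.sum_congr rfl fun j _ => by ring

end Proj

/-- lower bound on the energy of `h = A_Λᵀ A_Λ x̃` on the support of `x̃`. -/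
theorem stmt13 {M N : ℕ} (Φ : Matrix (Fin M) (Fin N) ℝ) (δ : ℝ) (Λ : Finset (Fin N))
    (xt : Fin N → ℝ) (hdisj : supp xt ∩ Λ = ∅) (hδ : δ < 1 / 2)
    (hRIP : RIP ((supp xt).card + Λ.card) Φ δ)
    (h : Fin N → ℝ) (hh : h = (Amat Φ Λ)ᵀ.mulVec ((Amat Φ Λ).mulVec xt)) :
    (1 - 2 * δ) / (1 - δ) * l2 xt ≤ l2 (restr (supp xt) h) := by
  classical
  obtain ⟨hδ0, hδ1, hR⟩ := hRIP
  have hδhalf : 0 < 1 - δ := by linarith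
  set K : ℕ := (supp xt).card + Λ.card with hK
  set y : Fin M → ℝ := Φ.mulVec xt with hy
  set Ksp := colSpan Φ Λ with hKsp
  set yE : EuclideanSpace ℝ (Fin M) := (WithLp.equiv 2 (Fin M → ℝ)).symm y with hyE
  set pE : EuclideanSpace ℝ (Fin M) := (Submodule.orthogonalProjectionOnto Ksp yE : EuclideanSpace ℝ (Fin M))
    with hpE
  set p : Fin M → ℝ := WithLp.equiv 2 (Fin M → ℝ) pE with hp
  -- obtain the coefficient vector z with Φ z = p and supp z ⊆ Λ
  have hmem : pE ∈ Ksp := SetLike.coe_mem _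
  rw [hKsp, colSpan] at hmem
  obtain ⟨l, hlsupp, hlc⟩ := (Finsupp.mem_span_image_iff_linearCombination ℝ).mp hmem
  set z : Fin N → ℝ := fun j => l j with hz
  have hzsupp : supp z ⊆ Λ := by
    intro j hj
    simp only [supp, Finset.mem_filter, Finset.mem_univ, true_and, hz] at hj
    have : j ∈ l.support := Finsupp.mem_support_iff.mpr hj
    exact_mod_cast (Finsupp.mem_supported ℝ l).mp hlsupp this
  have hsumE : pE = ∑ j, l j • ((WithLp.equiv 2 (Fin M → ℝ)).symm fun i => Φ i j) := by
    rw [← hlc, Finsupp.linearCombination_apply, Finsupp.sum_fintype]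
    intro j; exact zero_smul _ _
  have hΦz : Φ.mulVec z = p := by
    funext i
    have h1 : p i = ∑ j, l j * Φ i j := by
      rw [hp]
      show pE i = _
      rw [hsumE, E_sum_apply]
      exact Finset.sum_congr rfl fun j _ => rfl
    rw [h1, Matrix.mulVec, dotProduct]
    exact Finset.sum_congr rfl fun j _ => mul_comm _ _
  -- orthogonality
  have hOrth : ∀ w : EuclideanSpace ℝ (Fin M), w ∈ Ksp → ∑ i, (y i - p i) * w i = 0 := by
    intro w hw
    have h0 := Submodule.starProjection_inner_eq_zero (K := Ksp) yE w hw
    rw [inner_E] at h0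
    exact h0
  -- cardinality facts
  have hcard1 : (supp xt).card ≤ K := Nat.le_add_right _ _
  have hcardz : (supp z).card ≤ K :=
    le_trans (Finset.card_le_card hzsupp) (Nat.le_add_left _ _)
  have hcard3 : (supp z ∪ supp xt).card ≤ K := by
    calc (supp z ∪ supp xt).card ≤ (Λ ∪ supp xt).card :=
          Finset.card_le_card (Finset.union_subset_union hzsupp (le_refl _))
      _ ≤ Λ.card + (supp xt).card := Finset.card_union_le _ _
      _ = K := by rw [hK, Nat.add_comm]
  -- disjointness : dotp z xt = 0
  have hdz : dotp z xt = 0 := by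
    rw [dotp]
    apply Finset.sum_eq_zero
    intro j _
    by_cases hxj : xt j = 0
    · rw [hxj, mul_zero]
    · have hjS : j ∈ supp xt := by simp [supp, hxj]
      have hjΛ : j ∉ Λ := fun hc => by
        have : j ∈ supp xt ∩ Λ := Finset.mem_inter.mpr ⟨hjS, hc⟩
        rw [hdisj] at this; exact absurd this (Finset.notMem_empty j)
      have : z j = 0 := by
        by_contra hc
        exact hjΛ (hzsupp (by simpa [supp] using hc))
      rw [this, zero_mul]
  set a := l2 xt with hadef
  set b := l2 z with hbdef
  -- RIP facts
  have hlow_xt : (1 - δ) * a ^ 2 ≤ l2 y ^ 2 := (hR xt hcard1).1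
  have hip : dotp (Φ.mulVec z) y ≤ δ * (b * a) := by
    have := rip_ip ⟨hδ0, hδ1, hR⟩ hcard3
    rw [hdz] at this
    linarith
  -- dotp p p = dotp p y ≤ δ b a
  have hppy : dotp p p = dotp p y := by
    have h0 := hOrth pE (SetLike.coe_mem _)
    have h1 : dotp (fun i => y i - p i) p = 0 := h0
    rw [dotp_sub_left] at h1
    have h2 : dotp y p = dotp p p := by linarith
    rw [← h2, dotp_comm]
  have hpy_le : dotp p y ≤ δ * (b * a) := by rw [← hΦz]; exact hip
  -- bound on b
  have hbz : (1 - δ) * b ^ 2 ≤ δ * (b * a) := by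
    have hlow_z : (1 - δ) * b ^ 2 ≤ l2 (Φ.mulVec z) ^ 2 := (hR z hcardz).1
    have : l2 (Φ.mulVec z) ^ 2 = dotp p p := by rw [← dotp_self, hΦz]
    linarith [hppy, hpy_le]
  have hb_le : b ≤ δ / (1 - δ) * a := by
    rcases eq_or_lt_of_le (l2_nonneg z) with h0 | h0
    · rw [← hbdef] at h0
      rw [← h0]
      exact mul_nonneg (div_nonneg hδ0.le hδhalf.le) (l2_nonneg xt)
    · rw [← hbdef] at h0
      rw [div_mul_eq_mul_div, le_div_iff₀ hδhalf]
      nlinarith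
  -- the residual r = A xt
  set r : Fin N → ℝ → Prop := fun _ _ => True with hrdummy
  have hAxt : (Amat Φ Λ).mulVec xt = fun i => y i - p i := amat_mulVec Φ Λ xt
  have hrp : dotp (fun i => y i - p i) p = 0 := hOrth pE (SetLike.coe_mem _)
  have hrr : dotp (fun i => y i - p i) (fun i => y i - p i) = l2 y ^ 2 - dotp p y := by
    rw [dotp_sub_left]
    have h1 : dotp y (fun i => y i - p i) = l2 y ^ 2 - dotp y p := by
      rw [dotp_comm, dotp_sub_left, dotp_self, dotp_comm p y]
    have h2 : dotp p (fun i => y i - p i) = 0 := by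
      rw [dotp_comm]; exact hrp
    rw [h1, h2, dotp_comm y p]
    ring
  -- chain on h
  have hhx : dotp h xt = dotp (fun i => y i - p i) (fun i => y i - p i) := by
    rw [hh, dotp_transpose_mulVec, hAxt, dotp_comm]
  have hrestr : dotp (restr (supp xt) h) xt = dotp h xt := by
    rw [dotp, dotp]
    apply Finset.sum_congr rfl
    intro j _
    by_cases hj : j ∈ supp xt
    · simp [restr, hj]
    · have hxj : xt j = 0 := by
        by_contra hc
        exact hj (by simp [supp, hc])
      simp [restr, hj, hxj]
  have hCS : dotp (restr (supp xt) h) xt ≤ l2 (restr (supp xt) h) * a :=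
    dotp_le_l2_mul_l2 _ _
  -- lower bound on dotp r r
  have hmain : (1 - 2 * δ) / (1 - δ) * a ^ 2 ≤ l2 (restr (supp xt) h) * a := by
    have hb2 : δ * (b * a) ≤ δ * ((δ / (1 - δ) * a) * a) := by
      apply mul_le_mul_of_nonneg_left _ hδ0.le
      exact mul_le_mul_of_nonneg_right hb_le (l2_nonneg xt)
    have hident : (1 - δ) * a ^ 2 - δ * ((δ / (1 - δ) * a) * a)
        = (1 - 2 * δ) / (1 - δ) * a ^ 2 := by
      field_simp
      ring
    have : (1 - 2 * δ) / (1 - δ) * a ^ 2 ≤ dotp (restr (supp xt) h) xt := by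
      rw [hrestr, hhx, hrr]
      linarith
    linarith
  rcases eq_or_lt_of_le (l2_nonneg xt) with h0 | h0
  · rw [← hadef] at h0
    rw [← h0, mul_zero]
    exact l2_nonneg _
  · rw [← hadef] at h0
    have := hmain
    rw [sq] at this
    rw [← mul_assoc] at this
    exact le_of_mul_le_mul_right this h0
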